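/- arXiv:1309.4151 — 3 statements merged into one kernel-verified Lean document; each statement's English description precedes it below -/
import Mathlib

section
/- Suppose f satisfies the local Hölder condition with exponent β > 0 and constant L > 0 on U_{x₀,h}, that f(x) ≤ Γ for all x ∈ I, that H(x₀) ≥ γ, that √2 · L · h^β ≤ γ, that Nh ≥ 1, and that the full square window {x₀ + (i/N, j/N) : |i| ≤ Nh, |j| ≤ Nh} is contained in I. Then the variance term of the oracle weights satisfies f(x₀) · Σ_{x∈U_{x₀,h}} w*_h(x)² ≤ 3Γ / (h² n). -/
open Real Finset

set_option maxHeartbeats 1000000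
noncomputable section

/-- The uniform `N × N` pixel grid `I = {1/N, 2/N, …, 1}²` in `(0,1]²`. -/
def grid (N : ℕ) : Finset (ℝ × ℝ) :=
  (Finset.Icc 1 N ×ˢ Finset.Icc 1 N).image (fun p => ((p.1 : ℝ) / N, (p.2 : ℝ) / N))

/-- The search window `U_{x₀,h} = {x ∈ I : ‖x − x₀‖_∞ ≤ h}` (the norm on `ℝ × ℝ` is the
sup norm). -/
def window (N : ℕ) (x₀ : ℝ × ℝ) (h : ℝ) : Finset (ℝ × ℝ) :=
  (grid N).filter (fun x => ‖x - x₀‖ ≤ h)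

/-- The oracle weights
`w*_h(x) = exp(−(f x − f x₀)²/H(x₀)²) / Σ_{x'∈U_{x₀,h}} exp(−(f x' − f x₀)²/H(x₀)²)`. -/
def oracleWeight (N : ℕ) (f H : ℝ × ℝ → ℝ) (x₀ : ℝ × ℝ) (h : ℝ) (x : ℝ × ℝ) : ℝ :=
  Real.exp (-(f x - f x₀) ^ 2 / (H x₀) ^ 2) /
    ∑ x' ∈ window N x₀ h, Real.exp (-(f x' - f x₀) ^ 2 / (H x₀) ^ 2)

/-- **Variance term bound for the oracle weights:**
`f(x₀) · Σ_{x∈U_{x₀,h}} w*_h(x)² ≤ 3Γ/(h² n)`. -/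
theorem oracle_variance_bound
    (N k : ℕ) (hN : 1 ≤ N) (hk : 1 ≤ k)
    (n : ℝ) (hn : n = (N : ℝ) ^ 2) (h : ℝ) (hh : h = (k : ℝ) / N) (hNh : 1 ≤ (N : ℝ) * h)
    (f H : ℝ × ℝ → ℝ) (hf0 : ∀ x ∈ grid N, 0 ≤ f x)
    (Γ : ℝ) (hfΓ : ∀ x ∈ grid N, f x ≤ Γ)
    (x₀ : ℝ × ℝ) (hx₀ : x₀ ∈ grid N)
    (β L γ : ℝ) (hβ : 0 < β) (hL : 0 < L)
    (hHolder : ∀ x ∈ window N x₀ h, ∀ y ∈ window N x₀ h, |f x - f y| ≤ L * ‖x - y‖ ^ β)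
    (hHγ : γ ≤ H x₀) (hγ : Real.sqrt 2 * L * h ^ β ≤ γ)
    (hfull : ∀ i j : ℤ, |i| ≤ (k : ℤ) → |j| ≤ (k : ℤ) →
      (x₀.1 + (i : ℝ) / N, x₀.2 + (j : ℝ) / N) ∈ grid N) :
    f x₀ * ∑ x ∈ window N x₀ h, (oracleWeight N f H x₀ h x) ^ 2 ≤
      3 * Γ / (h ^ 2 * n) := by
  have hN0 : (0:ℝ) < N := by exact_mod_cast Nat.lt_of_lt_of_le Nat.zero_lt_one hN
  have hk0 : (0:ℝ) < k := by exact_mod_cast Nat.lt_of_lt_of_le Nat.zero_lt_one hk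
  have hh0 : 0 < h := by rw [hh]; positivity
  set W := window N x₀ h with hW
  set D := ∑ x' ∈ W, Real.exp (-(f x' - f x₀) ^ 2 / (H x₀) ^ 2) with hD
  have hx₀W : x₀ ∈ W := by
    refine Finset.mem_filter.mpr ⟨hx₀, ?_⟩
    rw [sub_self, norm_zero]; exact hh0.le
  have hD0 : 0 < D := Finset.sum_pos (fun x _ => Real.exp_pos _) ⟨x₀, hx₀W⟩
  have hγ0 : 0 < γ := lt_of_lt_of_le (by positivity) hγ
  have hH0 : 0 < H x₀ := lt_of_lt_of_le hγ0 hHγ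
  -- each exponential term is at least exp(-(1/2))
  have hterm_ge : ∀ x ∈ W, Real.exp (-(1/2)) ≤ Real.exp (-(f x - f x₀) ^ 2 / (H x₀) ^ 2) := by
    intro x hx
    have hnorm : ‖x - x₀‖ ≤ h := (Finset.mem_filter.mp hx).2
    have hLh : 0 ≤ L * h ^ β := by positivity
    have hb : |f x - f x₀| ≤ L * h ^ β := by
      refine (hHolder x hx x₀ hx₀W).trans ?_
      have : ‖x - x₀‖ ^ β ≤ h ^ β :=
        Real.rpow_le_rpow (norm_nonneg _) hnorm hβ.le
      nlinarith
    have hs2 : Real.sqrt 2 ^ 2 = 2 := Real.sq_sqrt (by norm_num)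
    have q1 : (f x - f x₀) ^ 2 ≤ (L * h ^ β) ^ 2 := by
      nlinarith [sq_abs (f x - f x₀), mul_le_mul hb hb (abs_nonneg _) hLh]
    have q2 : 2 * (L * h ^ β) ^ 2 ≤ γ ^ 2 := by
      have := mul_le_mul hγ hγ (by positivity) hγ0.le
      nlinarith [hs2]
    have q3 : γ ^ 2 ≤ (H x₀) ^ 2 := by nlinarith
    have hsq : (f x - f x₀) ^ 2 ≤ (H x₀) ^ 2 / 2 := by linarith
    have hdiv : (f x - f x₀) ^ 2 / (H x₀) ^ 2 ≤ 1/2 := by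
      rw [div_le_iff₀ (by positivity : (0:ℝ) < (H x₀) ^ 2)]
      nlinarith
    apply Real.exp_le_exp.mpr
    rw [neg_div, neg_le_neg_iff]
    exact hdiv
  -- the full (2k+1)² sub-square is contained in the window
  have hS : ((Finset.Icc (-(k:ℤ)) k ×ˢ Finset.Icc (-(k:ℤ)) k).image
      (fun p : ℤ × ℤ => ((x₀.1 + (p.1:ℝ)/N, x₀.2 + (p.2:ℝ)/N) : ℝ × ℝ))) ⊆ W := by
    intro x hx
    simp only [Finset.mem_image, Finset.mem_product, Finset.mem_Icc] at hx
    obtain ⟨⟨i, j⟩, ⟨⟨hi1, hi2⟩, hj1, hj2⟩, rfl⟩ := hx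
    refine Finset.mem_filter.mpr
      ⟨hfull i j (abs_le.mpr ⟨hi1, hi2⟩) (abs_le.mpr ⟨hj1, hj2⟩), ?_⟩
    have hsub : ((x₀.1 + (i:ℝ)/N, x₀.2 + (j:ℝ)/N) : ℝ × ℝ) - x₀
        = (((i:ℝ)/N, (j:ℝ)/N) : ℝ × ℝ) := by
      simp [Prod.ext_iff, Prod.sub_def]
    rw [hsub, Prod.norm_def]
    have habs : ∀ m : ℤ, |m| ≤ (k:ℤ) → ‖((m:ℝ)/N)‖ ≤ h := by
      intro m hm
      have hm' : |(m:ℝ)| ≤ (k:ℝ) := by exact_mod_cast hm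
      rw [Real.norm_eq_abs, abs_div, abs_of_pos hN0, hh]
      gcongr
    exact max_le (habs i (abs_le.mpr ⟨hi1, hi2⟩)) (habs j (abs_le.mpr ⟨hj1, hj2⟩))
  -- cardinality of the sub-square
  have hcard : ((2*k+1)^2 : ℝ) ≤ (W.card : ℝ) := by
    have hinj : Set.InjOn (fun p : ℤ × ℤ => ((x₀.1 + (p.1:ℝ)/N, x₀.2 + (p.2:ℝ)/N) : ℝ × ℝ))
        ↑(Finset.Icc (-(k:ℤ)) k ×ˢ Finset.Icc (-(k:ℤ)) k) := by
      intro p _ q _ hpq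
      simp only [Prod.ext_iff] at hpq
      obtain ⟨h1, h2⟩ := hpq
      have e1 : ((p.1:ℝ))/N = (q.1:ℝ)/N := by linarith
      have e2 : ((p.2:ℝ))/N = (q.2:ℝ)/N := by linarith
      field_simp at e1 e2
      exact Prod.ext (by exact_mod_cast e1) (by exact_mod_cast e2)
    have hc := Finset.card_image_of_injOn hinj
    have hcc : (Finset.Icc (-(k:ℤ)) k).card = 2*k+1 := by
      rw [Int.card_Icc]
      omega
    have hcard' : (2*k+1)^2 ≤ W.card := by
      calc (2*k+1)^2 = ((Finset.Icc (-(k:ℤ)) k ×ˢ Finset.Icc (-(k:ℤ)) k).image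
            (fun p : ℤ × ℤ => ((x₀.1 + (p.1:ℝ)/N, x₀.2 + (p.2:ℝ)/N) : ℝ × ℝ))).card := by
            rw [hc, Finset.card_product, hcc]; ring
        _ ≤ W.card := Finset.card_le_card hS
    exact_mod_cast hcard'
  -- lower bound for D
  have hDge : ((2*(k:ℝ)+1))^2 * Real.exp (-(1/2)) ≤ D := by
    have h1 : (W.card : ℝ) * Real.exp (-(1/2)) ≤ D := by
      have := Finset.card_nsmul_le_sum W
        (fun x => Real.exp (-(f x - f x₀) ^ 2 / (H x₀) ^ 2)) (Real.exp (-(1/2))) hterm_ge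
      simpa [nsmul_eq_mul] using this
    refine le_trans ?_ h1
    have h2 : ((2*(k:ℝ)+1))^2 ≤ (W.card : ℝ) := by push_cast at hcard ⊢; linarith
    nlinarith [Real.exp_pos (-(1/2):ℝ)]
  -- exp(-(1/2)) ≥ 1/2
  have hexphalf : (1:ℝ)/2 ≤ Real.exp (-(1/2)) := by
    have hmul : Real.exp ((1:ℝ)/2) * Real.exp ((1:ℝ)/2) = Real.exp 1 := by
      rw [← Real.exp_add]; norm_num
    have h3 : Real.exp 1 < 3 := lt_trans Real.exp_one_lt_d9 (by norm_num)
    have h2 : Real.exp ((1:ℝ)/2) ≤ 2 := by nlinarith [Real.exp_pos ((1:ℝ)/2)]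
    have hme : Real.exp (-(1/2)) * Real.exp ((1:ℝ)/2) = 1 := by
      rw [← Real.exp_add]; norm_num
    nlinarith [Real.exp_pos (-(1/2):ℝ), Real.exp_pos ((1:ℝ)/2)]
  -- bound for sum of squared weights
  have hw : ∀ x, oracleWeight N f H x₀ h x
      = Real.exp (-(f x - f x₀) ^ 2 / (H x₀) ^ 2) / D := by
    intro x; rw [oracleWeight, ← hW, ← hD]
  have hSw2 : ∑ x ∈ W, (oracleWeight N f H x₀ h x) ^ 2 ≤ 1/D := by
    have hle : ∀ x ∈ W, (oracleWeight N f H x₀ h x) ^ 2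
        ≤ Real.exp (-(f x - f x₀) ^ 2 / (H x₀) ^ 2) / D^2 := by
      intro x _
      have hex1 : Real.exp (-(f x - f x₀) ^ 2 / (H x₀) ^ 2) ≤ 1 := by
        rw [Real.exp_le_one_iff]
        apply div_nonpos_of_nonpos_of_nonneg
        · simp [sq_nonneg]
        · positivity
      have hex0 : 0 ≤ Real.exp (-(f x - f x₀) ^ 2 / (H x₀) ^ 2) := (Real.exp_pos _).le
      rw [hw x, div_pow]
      apply div_le_div_of_nonneg_right ?_ (by positivity)
      nlinarith
    calc ∑ x ∈ W, (oracleWeight N f H x₀ h x) ^ 2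
        ≤ ∑ x ∈ W, Real.exp (-(f x - f x₀) ^ 2 / (H x₀) ^ 2) / D^2 :=
          Finset.sum_le_sum hle
      _ = D / D^2 := by rw [← Finset.sum_div, ← hD]
      _ = 1/D := by rw [sq]; field_simp
  -- assemble
  have hΓ0 : 0 ≤ Γ := le_trans (hf0 x₀ hx₀) (hfΓ x₀ hx₀)
  have hSw2nn : 0 ≤ ∑ x ∈ W, (oracleWeight N f H x₀ h x) ^ 2 :=
    Finset.sum_nonneg fun x _ => sq_nonneg _
  have hk2 : h ^ 2 * n = (k:ℝ)^2 := by
    rw [hh, hn]; field_simp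
  have hkD : ((k:ℝ))^2 ≤ 3 * D := by
    have h1 : ((2*(k:ℝ)+1))^2 * (1/2) ≤ D := by
      refine le_trans ?_ hDge
      have : (0:ℝ) ≤ ((2*(k:ℝ)+1))^2 := by positivity
      nlinarith
    nlinarith [hk0]
  calc f x₀ * ∑ x ∈ W, (oracleWeight N f H x₀ h x) ^ 2
      ≤ Γ * (1/D) :=
        mul_le_mul (hfΓ x₀ hx₀) hSw2 hSw2nn hΓ0
    _ ≤ 3 * Γ / (k:ℝ)^2 := by
        rw [mul_one_div, div_le_div_iff₀ hD0 (by positivity)]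
        nlinarith
    _ = 3 * Γ / (h ^ 2 * n) := by rw [hk2]
end
end

section
/- Let 0 ≤ f₁, f₂ ≤ Γ and let Y₁, Y₂ be independent Poisson random variables with means f₁ and f₂. Define Z = (Y₁ − Y₂)² − (f₁ − f₂)² − f₁ − f₂. Then E Z = 0 and E exp( |Z|^{1/2} ) ≤ exp( 2Γ + 2√Γ + 2(e−1)Γ ). -/
open MeasureTheory ProbabilityTheory Real
open scoped NNReal ENNReal

lemma pois_hs_one (r : ℝ≥0) : HasSum (fun n => poissonPMFReal r n) 1 :=
  poissonPMFRealSum r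

lemma pois_hs_mean (r : ℝ≥0) :
    HasSum (fun n => poissonPMFReal r n * n) (r : ℝ) := by
  set f : ℕ → ℝ := fun n => poissonPMFReal r n * n with hf
  have h1 : HasSum (fun n => f (n + 1)) ((r : ℝ)) := by
    have he : (fun n => f (n + 1)) = fun n => (r : ℝ) * poissonPMFReal r n := by
      funext n
      have hfac : ((n.factorial : ℝ)) ≠ 0 := Nat.cast_ne_zero.mpr n.factorial_ne_zero
      simp only [hf, poissonPMFReal, Nat.factorial_succ, pow_succ]
      push_cast
      field_simp
    rw [he]
    simpa [poissonPMFReal] using (poissonPMFRealSum r).mul_left (r : ℝ)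
  have := (Finset.range 1).sum f
  have h2 : HasSum (fun n => f (n + 1)) ((r : ℝ) - ∑ i ∈ Finset.range 1, f i) := by
    simpa [hf, poissonPMFReal] using h1
  exact (hasSum_nat_add_iff' 1).mp h2

lemma pois_hs_fac2 (r : ℝ≥0) :
    HasSum (fun n => poissonPMFReal r n * ((n : ℝ) * ((n : ℝ) - 1))) ((r : ℝ) ^ 2) := by
  set f : ℕ → ℝ := fun n => poissonPMFReal r n * ((n : ℝ) * ((n : ℝ) - 1)) with hf
  have h1 : HasSum (fun n => f (n + 2)) ((r : ℝ) ^ 2) := by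
    have he : (fun n => f (n + 2)) = fun n => (r : ℝ) ^ 2 * poissonPMFReal r n := by
      funext n
      have hfac : ((n.factorial : ℝ)) ≠ 0 := Nat.cast_ne_zero.mpr n.factorial_ne_zero
      simp only [hf, poissonPMFReal, Nat.factorial_succ, pow_succ]
      push_cast
      field_simp
      ring
    rw [he]
    simpa [poissonPMFReal] using (poissonPMFRealSum r).mul_left ((r : ℝ) ^ 2)
  have h2 : HasSum (fun n => f (n + 2)) ((r : ℝ) ^ 2 - ∑ i ∈ Finset.range 2, f i) := by
    have : ∑ i ∈ Finset.range 2, f i = 0 := by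
      simp [hf, Finset.sum_range_succ]
    rw [this]; simpa using h1
  exact (hasSum_nat_add_iff' 2).mp h2

lemma pois_hs_sq (r : ℝ≥0) :
    HasSum (fun n => poissonPMFReal r n * (n : ℝ) ^ 2) ((r : ℝ) + (r : ℝ) ^ 2) := by
  have h := (pois_hs_mean r).add (pois_hs_fac2 r)
  have he : (fun n => poissonPMFReal r n * n + poissonPMFReal r n * ((n : ℝ) * ((n : ℝ) - 1)))
      = fun n => poissonPMFReal r n * (n : ℝ) ^ 2 := by
    funext n; ring
  rwa [he] at h

lemma pois_hs_exp (r : ℝ≥0) :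
    HasSum (fun n => poissonPMFReal r n * Real.exp n)
      (Real.exp ((r : ℝ) * (Real.exp 1 - 1))) := by
  have h0 : HasSum (fun n : ℕ => ((r : ℝ) * Real.exp 1) ^ n / n.factorial)
      (Real.exp ((r : ℝ) * Real.exp 1)) := by
    rw [Real.exp_eq_exp_ℝ]
    exact NormedSpace.expSeries_div_hasSum_exp _
  have h := h0.mul_left (Real.exp (-(r : ℝ)))
  have he : (fun n : ℕ => Real.exp (-(r : ℝ)) * (((r : ℝ) * Real.exp 1) ^ n / n.factorial))
      = fun n => poissonPMFReal r n * Real.exp n := by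
    funext n
    rw [poissonPMFReal]
    rw [mul_pow, ← Real.exp_nat_mul]
    ring_nf
  have hv : Real.exp (-(r : ℝ)) * Real.exp ((r : ℝ) * Real.exp 1)
      = Real.exp ((r : ℝ) * (Real.exp 1 - 1)) := by
    rw [← Real.exp_add]; ring_nf
  rw [he, hv] at h
  exact h

lemma pois_apply_singleton (r : ℝ≥0) (n : ℕ) :
    poissonMeasure r {n} = ENNReal.ofReal (poissonPMFReal r n) := by
  rw [poissonMeasure_singleton]
  rfl

lemma pois_integrable (r : ℝ≥0) (f : ℕ → ℝ) (hf : ∀ n, 0 ≤ f n)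
    (hs : Summable (fun n => poissonPMFReal r n * f n)) :
    Integrable f (poissonMeasure r) := by
  refine ⟨Measurable.aestronglyMeasurable (measurable_from_top), ?_⟩
  rw [hasFiniteIntegral_iff_ofReal (Filter.Eventually.of_forall hf)]
  rw [MeasureTheory.lintegral_countable' (fun n => ENNReal.ofReal (f n))]
  have he : ∀ n : ℕ, ENNReal.ofReal (f n) * poissonMeasure r {n}
      = ENNReal.ofReal (poissonPMFReal r n * f n) := by
    intro n
    rw [pois_apply_singleton, ← ENNReal.ofReal_mul (hf n), mul_comm]
  rw [tsum_congr he, ← ENNReal.ofReal_tsum_of_nonneg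
    (fun n => mul_nonneg poissonPMFReal_nonneg (hf n)) hs]
  exact ENNReal.ofReal_lt_top

lemma pois_integral (r : ℝ≥0) (f : ℕ → ℝ) (hf : Integrable f (poissonMeasure r)) :
    ∫ n, f n ∂(poissonMeasure r) = ∑' n, poissonPMFReal r n * f n := by
  rw [integral_countable hf]
  refine tsum_congr fun n => ?_
  rw [poissonMeasure_real_singleton, smul_eq_mul]
  rfl

lemma sqrt_add_le' {a b : ℝ} (ha : 0 ≤ a) (hb : 0 ≤ b) :
    Real.sqrt (a + b) ≤ Real.sqrt a + Real.sqrt b := by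
  rw [Real.sqrt_le_left (add_nonneg (Real.sqrt_nonneg a) (Real.sqrt_nonneg b))]
  nlinarith [Real.sq_sqrt ha, Real.sq_sqrt hb, Real.sqrt_nonneg a, Real.sqrt_nonneg b,
    mul_nonneg (Real.sqrt_nonneg a) (Real.sqrt_nonneg b)]

/-- **Exponential moment of the centered squared difference.** Let `0 ≤ f₁, f₂ ≤ Γ` and let
`Y₁, Y₂` be independent Poisson variables with means `f₁, f₂`. With
`Z = (Y₁ − Y₂)² − (f₁ − f₂)² − f₁ − f₂`, one has `E Z = 0` and
`E exp(|Z|^{1/2}) ≤ exp(2Γ + 2√Γ + 2(e−1)Γ)`. -/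
theorem poisson_diff_sq_exp_moment
    {Ω : Type*} [MeasurableSpace Ω] (μ : Measure Ω) [IsProbabilityMeasure μ]
    (Γ f₁ f₂ : ℝ) (h₁ : 0 ≤ f₁) (h₂ : 0 ≤ f₂) (h₁Γ : f₁ ≤ Γ) (h₂Γ : f₂ ≤ Γ)
    (Y₁ Y₂ : Ω → ℕ) (hm₁ : Measurable Y₁) (hm₂ : Measurable Y₂)
    (hind : IndepFun Y₁ Y₂ μ)
    (hd₁ : Measure.map Y₁ μ = poissonMeasure f₁.toNNReal)
    (hd₂ : Measure.map Y₂ μ = poissonMeasure f₂.toNNReal)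
    (Z : Ω → ℝ)
    (hZ : Z = fun ω => ((Y₁ ω : ℝ) - (Y₂ ω : ℝ)) ^ 2 - (f₁ - f₂) ^ 2 - f₁ - f₂) :
    (∫ ω, Z ω ∂μ = 0) ∧
    ∫ ω, Real.exp (|Z ω| ^ ((1 : ℝ) / 2)) ∂μ ≤
      Real.exp (2 * Γ + 2 * Real.sqrt Γ + 2 * (Real.exp 1 - 1) * Γ) := by
  have hΓ : 0 ≤ Γ := le_trans h₁ h₁Γ
  set r₁ := f₁.toNNReal with hr₁def
  set r₂ := f₂.toNNReal with hr₂def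
  have hr₁ : (r₁ : ℝ) = f₁ := Real.coe_toNNReal f₁ h₁
  have hr₂ : (r₂ : ℝ) = f₂ := Real.coe_toNNReal f₂ h₂
  -- transfer lemmas
  have key₁ : ∀ g : ℕ → ℝ, Integrable g (poissonMeasure r₁) →
      Integrable (fun ω => g (Y₁ ω)) μ ∧
      ∫ ω, g (Y₁ ω) ∂μ = ∫ n, g n ∂(poissonMeasure r₁) := by
    intro g hg
    constructor
    · have := (integrable_map_measure (μ := μ) (f := Y₁) (g := g)
        (Measurable.aestronglyMeasurable measurable_from_top) hm₁.aemeasurable).mp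
        (by rwa [hd₁])
      exact this
    · rw [← hd₁, integral_map hm₁.aemeasurable
        (Measurable.aestronglyMeasurable measurable_from_top)]
  have key₂ : ∀ g : ℕ → ℝ, Integrable g (poissonMeasure r₂) →
      Integrable (fun ω => g (Y₂ ω)) μ ∧
      ∫ ω, g (Y₂ ω) ∂μ = ∫ n, g n ∂(poissonMeasure r₂) := by
    intro g hg
    constructor
    · have := (integrable_map_measure (μ := μ) (f := Y₂) (g := g)
        (Measurable.aestronglyMeasurable measurable_from_top) hm₂.aemeasurable).mp
        (by rwa [hd₂])
      exact this
    · rw [← hd₂, integral_map hm₂.aemeasurable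
        (Measurable.aestronglyMeasurable measurable_from_top)]
  -- specific functions
  have hint_id : ∀ r : ℝ≥0, Integrable (fun n : ℕ => (n : ℝ)) (poissonMeasure r) :=
    fun r => pois_integrable r _ (fun n => Nat.cast_nonneg n) (pois_hs_mean r).summable
  have hint_sq : ∀ r : ℝ≥0, Integrable (fun n : ℕ => (n : ℝ) ^ 2) (poissonMeasure r) :=
    fun r => pois_integrable r _ (fun n => sq_nonneg _) (pois_hs_sq r).summable
  have hint_ex : ∀ r : ℝ≥0, Integrable (fun n : ℕ => Real.exp n) (poissonMeasure r) :=
    fun r => pois_integrable r _ (fun n => (Real.exp_pos _).le) (pois_hs_exp r).summable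
  have hval_id : ∀ r : ℝ≥0, ∫ n, (n : ℝ) ∂(poissonMeasure r) = (r : ℝ) := by
    intro r
    rw [pois_integral r _ (hint_id r)]
    exact (pois_hs_mean r).tsum_eq
  have hval_sq : ∀ r : ℝ≥0, ∫ n, (n : ℝ) ^ 2 ∂(poissonMeasure r) = (r : ℝ) + (r : ℝ) ^ 2 := by
    intro r
    rw [pois_integral r _ (hint_sq r)]
    exact (pois_hs_sq r).tsum_eq
  have hval_ex : ∀ r : ℝ≥0, ∫ n, Real.exp n ∂(poissonMeasure r)
      = Real.exp ((r : ℝ) * (Real.exp 1 - 1)) := by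
    intro r
    rw [pois_integral r _ (hint_ex r)]
    exact (pois_hs_exp r).tsum_eq
  -- random variables
  set X₁ : Ω → ℝ := fun ω => (Y₁ ω : ℝ) with hX₁def
  set X₂ : Ω → ℝ := fun ω => (Y₂ ω : ℝ) with hX₂def
  have hiX₁ : Integrable X₁ μ := (key₁ _ (hint_id r₁)).1
  have hiX₂ : Integrable X₂ μ := (key₂ _ (hint_id r₂)).1
  have hiX₁sq : Integrable (fun ω => X₁ ω ^ 2) μ := (key₁ _ (hint_sq r₁)).1
  have hiX₂sq : Integrable (fun ω => X₂ ω ^ 2) μ := (key₂ _ (hint_sq r₂)).1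
  have hindX : IndepFun X₁ X₂ μ := hind.comp measurable_from_top measurable_from_top
  have hiXX : Integrable (fun ω => X₁ ω * X₂ ω) μ := hindX.integrable_mul hiX₁ hiX₂
  have hEX₁ : ∫ ω, X₁ ω ∂μ = f₁ := by rw [(key₁ _ (hint_id r₁)).2, hval_id, hr₁]
  have hEX₂ : ∫ ω, X₂ ω ∂μ = f₂ := by rw [(key₂ _ (hint_id r₂)).2, hval_id, hr₂]
  have hEX₁sq : ∫ ω, X₁ ω ^ 2 ∂μ = f₁ + f₁ ^ 2 := by
    rw [(key₁ _ (hint_sq r₁)).2, hval_sq, hr₁]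
  have hEX₂sq : ∫ ω, X₂ ω ^ 2 ∂μ = f₂ + f₂ ^ 2 := by
    rw [(key₂ _ (hint_sq r₂)).2, hval_sq, hr₂]
  have hEXX : ∫ ω, X₁ ω * X₂ ω ∂μ = f₁ * f₂ := by
    have h := hindX.integral_mul_eq_mul_integral hiX₁.aestronglyMeasurable hiX₂.aestronglyMeasurable
    rw [hEX₁, hEX₂] at h
    simpa [Pi.mul_apply] using h
  constructor
  · -- mean zero
    have hZ' : Z = fun ω => (X₁ ω ^ 2 + X₂ ω ^ 2 - 2 * (X₁ ω * X₂ ω))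
        - ((f₁ - f₂) ^ 2 + f₁ + f₂) := by
      rw [hZ]; funext ω; simp only [hX₁def, hX₂def]; ring
    rw [hZ']
    have hadd : Integrable (fun ω => X₁ ω ^ 2 + X₂ ω ^ 2) μ := hiX₁sq.add hiX₂sq
    have hisum : Integrable (fun ω => X₁ ω ^ 2 + X₂ ω ^ 2 - 2 * (X₁ ω * X₂ ω)) μ :=
      hadd.sub (hiXX.const_mul 2)
    rw [integral_sub hisum (integrable_const _), integral_const, probReal_univ,
      integral_sub hadd (hiXX.const_mul 2),
      integral_add hiX₁sq hiX₂sq, integral_const_mul, hEX₁sq, hEX₂sq, hEXX]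
    simp only [ENNReal.toReal_one, one_smul]
    ring
  · -- exponential moment
    set c : ℝ := Γ + Real.sqrt (2 * Γ) with hcdef
    have hce : Measurable fun n : ℕ => Real.exp (n : ℝ) := measurable_from_top
    have hexpind : IndepFun (fun ω => Real.exp (X₁ ω)) (fun ω => Real.exp (X₂ ω)) μ :=
      hind.comp hce hce
    have hie₁ : Integrable (fun ω => Real.exp (X₁ ω)) μ := (key₁ _ (hint_ex r₁)).1
    have hie₂ : Integrable (fun ω => Real.exp (X₂ ω)) μ := (key₂ _ (hint_ex r₂)).1
    have hEe₁ : ∫ ω, Real.exp (X₁ ω) ∂μ = Real.exp (f₁ * (Real.exp 1 - 1)) := by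
      rw [(key₁ _ (hint_ex r₁)).2, hval_ex, hr₁]
    have hEe₂ : ∫ ω, Real.exp (X₂ ω) ∂μ = Real.exp (f₂ * (Real.exp 1 - 1)) := by
      rw [(key₂ _ (hint_ex r₂)).2, hval_ex, hr₂]
    have hiprod : Integrable (fun ω => Real.exp (X₁ ω) * Real.exp (X₂ ω)) μ :=
      hexpind.integrable_mul hie₁ hie₂
    have hEprod : ∫ ω, Real.exp (X₁ ω) * Real.exp (X₂ ω) ∂μ
        = Real.exp (f₁ * (Real.exp 1 - 1)) * Real.exp (f₂ * (Real.exp 1 - 1)) := by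
      have h := hexpind.integral_mul_eq_mul_integral hie₁.aestronglyMeasurable hie₂.aestronglyMeasurable
      rw [hEe₁, hEe₂] at h
      simpa [Pi.mul_apply] using h
    -- pointwise bound
    have hptw : ∀ ω, Real.exp (|Z ω| ^ ((1 : ℝ) / 2))
        ≤ Real.exp c * (Real.exp (X₁ ω) * Real.exp (X₂ ω)) := by
      intro ω
      have h0 : |Z ω| ^ ((1 : ℝ) / 2) = Real.sqrt |Z ω| := (Real.sqrt_eq_rpow _).symm
      have hX₁n : 0 ≤ X₁ ω := Nat.cast_nonneg _
      have hX₂n : 0 ≤ X₂ ω := Nat.cast_nonneg _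
      have habs : |Z ω| ≤ (X₁ ω - X₂ ω) ^ 2 + ((f₁ - f₂) ^ 2 + (f₁ + f₂)) := by
        rw [hZ]
        simp only [hX₁def, hX₂def]
        have := abs_sub ((X₁ ω - X₂ ω) ^ 2) ((f₁ - f₂) ^ 2 + (f₁ + f₂))
        calc |(X₁ ω - X₂ ω) ^ 2 - (f₁ - f₂) ^ 2 - f₁ - f₂|
            = |(X₁ ω - X₂ ω) ^ 2 - ((f₁ - f₂) ^ 2 + (f₁ + f₂))| := by ring_nf
          _ ≤ |(X₁ ω - X₂ ω) ^ 2| + |(f₁ - f₂) ^ 2 + (f₁ + f₂)| := abs_sub _ _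
          _ ≤ (X₁ ω - X₂ ω) ^ 2 + ((f₁ - f₂) ^ 2 + (f₁ + f₂)) := by
              rw [abs_of_nonneg (sq_nonneg _), abs_of_nonneg (by positivity)]
      have hsqrt : Real.sqrt |Z ω| ≤ X₁ ω + X₂ ω + c := by
        calc Real.sqrt |Z ω|
            ≤ Real.sqrt ((X₁ ω - X₂ ω) ^ 2 + ((f₁ - f₂) ^ 2 + (f₁ + f₂))) :=
              Real.sqrt_le_sqrt habs
          _ ≤ Real.sqrt ((X₁ ω - X₂ ω) ^ 2) + Real.sqrt ((f₁ - f₂) ^ 2 + (f₁ + f₂)) :=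
              sqrt_add_le' (sq_nonneg _) (by positivity)
          _ ≤ (X₁ ω + X₂ ω) + (Γ + Real.sqrt (2 * Γ)) := by
              gcongr ?_ + ?_
              · rw [Real.sqrt_sq_eq_abs]
                calc |X₁ ω - X₂ ω| ≤ |X₁ ω| + |X₂ ω| := abs_sub _ _
                  _ = X₁ ω + X₂ ω := by rw [abs_of_nonneg hX₁n, abs_of_nonneg hX₂n]
              · calc Real.sqrt ((f₁ - f₂) ^ 2 + (f₁ + f₂))
                    ≤ Real.sqrt ((f₁ - f₂) ^ 2) + Real.sqrt (f₁ + f₂) :=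
                      sqrt_add_le' (sq_nonneg _) (by linarith)
                  _ ≤ Γ + Real.sqrt (2 * Γ) := by
                      gcongr ?_ + ?_
                      · rw [Real.sqrt_sq_eq_abs]
                        exact abs_le.mpr ⟨by linarith, by linarith⟩
                      · exact Real.sqrt_le_sqrt (by linarith)
          _ = X₁ ω + X₂ ω + c := rfl
      rw [h0, ← Real.exp_add, ← Real.exp_add]
      exact Real.exp_le_exp.mpr (by linarith)
    -- measurability of the LHS
    have hmZ : Measurable Z := by
      rw [hZ]
      have hc₁ : Measurable fun ω => (Y₁ ω : ℝ) := measurable_from_top.comp hm₁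
      have hc₂ : Measurable fun ω => (Y₂ ω : ℝ) := measurable_from_top.comp hm₂
      exact ((((hc₁.sub hc₂).pow_const 2).sub measurable_const).sub
        measurable_const).sub measurable_const
    have hmL : Measurable fun ω => Real.exp (|Z ω| ^ ((1 : ℝ) / 2)) := by
      have : (fun ω => Real.exp (|Z ω| ^ ((1 : ℝ) / 2)))
          = fun ω => Real.exp (Real.sqrt |Z ω|) := by
        funext ω; rw [← Real.sqrt_eq_rpow]
      rw [this]
      exact Real.measurable_exp.comp (Real.continuous_sqrt.measurable.comp hmZ.abs)
    have hiL : Integrable (fun ω => Real.exp (|Z ω| ^ ((1 : ℝ) / 2))) μ := by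
      refine ((hiprod.const_mul (Real.exp c)).mono' hmL.aestronglyMeasurable ?_)
      refine Filter.Eventually.of_forall fun ω => ?_
      rw [Real.norm_eq_abs, abs_of_nonneg (Real.exp_pos _).le]
      exact hptw ω
    calc ∫ ω, Real.exp (|Z ω| ^ ((1 : ℝ) / 2)) ∂μ
        ≤ ∫ ω, Real.exp c * (Real.exp (X₁ ω) * Real.exp (X₂ ω)) ∂μ :=
          integral_mono hiL (hiprod.const_mul _) hptw
      _ = Real.exp c * (Real.exp (f₁ * (Real.exp 1 - 1)) * Real.exp (f₂ * (Real.exp 1 - 1))) := by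
          rw [integral_const_mul, hEprod]
      _ = Real.exp (c + (f₁ * (Real.exp 1 - 1) + f₂ * (Real.exp 1 - 1))) := by
          rw [← Real.exp_add, ← Real.exp_add]
      _ ≤ Real.exp (2 * Γ + 2 * Real.sqrt Γ + 2 * (Real.exp 1 - 1) * Γ) := by
          apply Real.exp_le_exp.mpr
          have he1 : (1 : ℝ) ≤ Real.exp 1 := by
            exact Real.one_le_exp zero_le_one
          have h2Γ : Real.sqrt (2 * Γ) ≤ 2 * Real.sqrt Γ := by
            rw [Real.sqrt_mul (by norm_num : (0:ℝ) ≤ 2) Γ]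
            have hs2 : Real.sqrt 2 ≤ 2 := by
              nlinarith [Real.sq_sqrt (by norm_num : (0:ℝ) ≤ 2), Real.sqrt_nonneg 2]
            nlinarith [Real.sqrt_nonneg Γ]
          rw [hcdef]
          nlinarith [Real.sqrt_nonneg Γ]
end

section
/- Let S be a nonempty finite set, H > 0, ε ≥ 0 with ε < H², and let a, b : S → [0,∞) satisfy |a(x) − b(x)| ≤ ε for all x ∈ S. Define the normalized exponential weights w_a(x) = exp(−a(x)/H²) / Σ_{x'∈S} exp(−a(x')/H²) and w_b(x) = exp(−b(x)/H²) / Σ_{x'∈S} exp(−b(x')/H²). Then for every x ∈ S, w_a(x) ≤ ( (1 + 2ε/H²) / (1 − ε/H²) ) · w_b(x). -/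
open Real Finset

lemma exp_le_one_add_two_mul {t : ℝ} (ht0 : 0 ≤ t) (ht1 : t ≤ 1) :
    Real.exp t ≤ 1 + 2 * t := by
  have h := convexOn_exp.2 (Set.mem_univ (0:ℝ)) (Set.mem_univ (1:ℝ))
    (by linarith : (0:ℝ) ≤ 1 - t) ht0 (by ring)
  simp only [smul_eq_mul, mul_zero, mul_one, zero_add, Real.exp_zero] at h
  have he : Real.exp 1 ≤ 3 := le_of_lt (by
    calc Real.exp 1 < 2.7182818286 := Real.exp_one_lt_d9
    _ ≤ 3 := by norm_num)
  nlinarith [h]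

lemma exp_two_mul_le {t : ℝ} (ht0 : 0 ≤ t) (ht1 : t < 1) :
    Real.exp (2 * t) ≤ (1 + 2 * t) / (1 - t) := by
  have h1 : Real.exp t ≤ 1 + 2 * t := exp_le_one_add_two_mul ht0 ht1.le
  have h2 : Real.exp t * (1 - t) ≤ 1 := by
    have h := Real.add_one_le_exp (-t)
    have hmul : Real.exp t * Real.exp (-t) = 1 := by rw [← Real.exp_add]; simp
    nlinarith [Real.exp_pos t]
  have h3 : Real.exp t ≤ 1 / (1 - t) := by
    rw [le_div_iff₀ (by linarith)]; linarith
  have : Real.exp (2 * t) = Real.exp t * Real.exp t := by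
    rw [← Real.exp_add]; ring_nf
  rw [this]
  calc Real.exp t * Real.exp t ≤ (1 + 2 * t) * (1 / (1 - t)) := by
        apply mul_le_mul h1 h3 (Real.exp_pos t).le (by linarith)
    _ = (1 + 2 * t) / (1 - t) := by ring

/-- **Stability of normalized exponential weights.** If `a, b : S → [0,∞)` satisfy
`|a(x) − b(x)| ≤ ε` on a nonempty finite set `S`, with `0 ≤ ε < H²`, then the normalized
exponential weights satisfy `w_a(x) ≤ ((1 + 2ε/H²)/(1 − ε/H²)) w_b(x)` for every `x ∈ S`. -/
theorem exp_weights_stability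
    {α : Type*} (S : Finset α) (hS : S.Nonempty) (H ε : ℝ) (hH : 0 < H)
    (hε : 0 ≤ ε) (hεH : ε < H ^ 2)
    (a b : α → ℝ) (ha : ∀ x ∈ S, 0 ≤ a x) (hb : ∀ x ∈ S, 0 ≤ b x)
    (hab : ∀ x ∈ S, |a x - b x| ≤ ε) :
    ∀ x ∈ S,
      Real.exp (-a x / H ^ 2) / (∑ x' ∈ S, Real.exp (-a x' / H ^ 2)) ≤
        ((1 + 2 * ε / H ^ 2) / (1 - ε / H ^ 2)) *
          (Real.exp (-b x / H ^ 2) / (∑ x' ∈ S, Real.exp (-b x' / H ^ 2))) := by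
  intro x hx
  have hH2 : (0:ℝ) < H ^ 2 := by positivity
  set t := ε / H ^ 2 with ht
  have ht0 : 0 ≤ t := by positivity
  have ht1 : t < 1 := (div_lt_one hH2).2 hεH
  have hSa : 0 < ∑ x' ∈ S, Real.exp (-a x' / H ^ 2) :=
    Finset.sum_pos (fun _ _ => Real.exp_pos _) hS
  have hSb : 0 < ∑ x' ∈ S, Real.exp (-b x' / H ^ 2) :=
    Finset.sum_pos (fun _ _ => Real.exp_pos _) hS
  -- pointwise bounds
  have keyab : ∀ y ∈ S, Real.exp (-a y / H ^ 2) ≤ Real.exp t * Real.exp (-b y / H ^ 2) := by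
    intro y hy
    rw [← Real.exp_add, Real.exp_le_exp]
    have h := (abs_le.1 (hab y hy)).1
    rw [ht]
    rw [← add_div, div_le_div_iff₀ hH2 hH2]
    exact mul_le_mul_of_nonneg_right (by linarith) hH2.le
  have keyba : ∀ y ∈ S, Real.exp (-b y / H ^ 2) ≤ Real.exp t * Real.exp (-a y / H ^ 2) := by
    intro y hy
    rw [← Real.exp_add, Real.exp_le_exp]
    have h := (abs_le.1 (hab y hy)).2
    rw [ht, ← add_div, div_le_div_iff₀ hH2 hH2]
    exact mul_le_mul_of_nonneg_right (by linarith) hH2.le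
  have hsum : ∑ x' ∈ S, Real.exp (-b x' / H ^ 2) ≤
      Real.exp t * ∑ x' ∈ S, Real.exp (-a x' / H ^ 2) := by
    rw [Finset.mul_sum]
    exact Finset.sum_le_sum keyba
  have hsum' : (∑ x' ∈ S, Real.exp (-b x' / H ^ 2)) / Real.exp t ≤
      ∑ x' ∈ S, Real.exp (-a x' / H ^ 2) := by
    rw [div_le_iff₀ (Real.exp_pos t)]
    linarith [hsum]
  have hposd : 0 < (∑ x' ∈ S, Real.exp (-b x' / H ^ 2)) / Real.exp t :=
    div_pos hSb (Real.exp_pos t)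
  calc Real.exp (-a x / H ^ 2) / (∑ x' ∈ S, Real.exp (-a x' / H ^ 2))
      ≤ (Real.exp t * Real.exp (-b x / H ^ 2)) /
          ((∑ x' ∈ S, Real.exp (-b x' / H ^ 2)) / Real.exp t) :=
        div_le_div₀ (by positivity) (keyab x hx) hposd hsum'
    _ = Real.exp (2 * t) * (Real.exp (-b x / H ^ 2) / ∑ x' ∈ S, Real.exp (-b x' / H ^ 2)) := by
        rw [show (2:ℝ) * t = t + t by ring, Real.exp_add]
        field_simp
    _ ≤ ((1 + 2 * ε / H ^ 2) / (1 - ε / H ^ 2)) *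
          (Real.exp (-b x / H ^ 2) / ∑ x' ∈ S, Real.exp (-b x' / H ^ 2)) := by
        apply mul_le_mul_of_nonneg_right _ (by positivity)
        have := exp_two_mul_le ht0 ht1
        rw [ht] at this
        exact this.trans_eq (by ring)
end
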